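/- Let T be a woven based matrix over an abelian group H. Any finite sequence N of intersection moves applicable to T can be replaced by an applicable sequence N_k∘⋯∘N_1 yielding the same resulting woven based matrix, such that: all intersection moves in N_m act on a common element g_m ∈ G, the elements g_1,…,g_k are pairwise distinct, and for each x ∈ I there is at most one move of N_m of the form I_□(g_m;x,·). Consequently, each N_m consists of at most ⌊#I/2⌋ intersection moves. -/

import Mathlib

universe u v

/-- A woven based matrix over an abelian group `H`: parts `G 1, …, G n` with base
elements `s i ∈ G i`, a weaving set `I`, and a skew-symmetric pairing `b` which is a
weaving map on `(G ∪ I) × I`. -/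
structure WovenBasedMatrix (α : Type u) (H : Type v) [DecidableEq α] [AddCommGroup H]
    (n : ℕ) where
  G : Fin n → Finset α
  I : Finset α
  s : Fin n → α
  b : α → α → H
  s_mem : ∀ i, s i ∈ G i
  disjointG : ∀ i j, i ≠ j → Disjoint (G i) (G j)
  disjointI : ∀ i, Disjoint (G i) I
  skew : ∀ a ∈ Finset.univ.biUnion G ∪ I, ∀ a' ∈ Finset.univ.biUnion G ∪ I,
    b a a' = - b a' a
  diag : ∀ a ∈ Finset.univ.biUnion G ∪ I, b a a = 0
  inter_zero : ∀ x ∈ I, ∀ y ∈ I, b x y = 0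
  weave_two : ∀ x ∈ I, ∃ i j : Fin n, i ≠ j ∧ b (s i) x ≠ 0 ∧ b (s j) x ≠ 0 ∧
    b (s i) x = - b (s j) x ∧ ∀ k : Fin n, b (s k) x ≠ 0 → k = i ∨ k = j
  weave_val : ∀ i : Fin n, ∀ g ∈ G i, ∀ x ∈ I, b g x = 0 ∨ b g x = b (s i) x

variable {α : Type u} {H : Type v} [DecidableEq α] [AddCommGroup H] {n : ℕ}

/-- The underlying set `G ∪ I` of a woven based matrix. -/
def WovenBasedMatrix.carrier (T : WovenBasedMatrix α H n) : Finset α :=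
  Finset.univ.biUnion T.G ∪ T.I

/-- The effect of the intersection move `I_□(g; x₁, x₂)` on the skew-symmetric map `b`,
where `sj` is the base element of the part containing `g`:
`b' g xₖ = b sj xₖ - b g xₖ` for `k = 1,2` (and symmetrically), `b' = b` elsewhere. -/
def IMap (b : α → α → H) (sj g x1 x2 : α) : α → α → H := fun a a' =>
  if a = g ∧ (a' = x1 ∨ a' = x2) then b sj a' - b a a'
  else if a' = g ∧ (a = x1 ∨ a = x2) then b a sj - b a a'
  else b a a'

/-- `x₁, x₂` are a `g`-annihilating pair (with `sj` the base element of `g`'s part). -/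
def IsGAnn (b : α → α → H) (sj g x1 x2 : α) : Prop :=
  b g x1 + b g x2 = 0 ∧ b sj x1 + b sj x2 = 0

/-- `x₁, x₂` are a `g`-unequal pair (with `sj` the base element of `g`'s part). -/
def IsGUnequal (b : α → α → H) (sj g x1 x2 : α) : Prop :=
  b g x1 ≠ b g x2 ∧ b sj x1 = b sj x2

/-- `MoveApplicable k b sj g x1 x2`: the intersection move `I_{k+1}(g;x₁,x₂)` is applicable to
the matrix `b`.  Here `k = 0` encodes the move `I₁` (needing a `g`-annihilating pair) and
`k = 1` encodes the move `I₂` (needing a `g`-unequal pair). -/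
def MoveApplicable (k : Fin 2) (b : α → α → H) (sj g x1 x2 : α) : Prop :=
  if k = 0 then IsGAnn b sj g x1 x2 else IsGUnequal b sj g x1 x2

/-- The data of an intersection move `I_{sq+1}(g; x₁, x₂)` with `g` in the part `G j`. -/
structure MoveDatum (α : Type u) (n : ℕ) where
  j : Fin n
  sq : Fin 2
  g : α
  x1 : α
  x2 : α

/-- The move datum refers to an element `g ∈ G j \ {s j}` and a pair of distinct
elements of the weaving set `I`. -/
def MoveDatum.valid (m : MoveDatum α n) (T : WovenBasedMatrix α H n) : Prop :=
  m.g ∈ T.G m.j ∧ m.g ≠ T.s m.j ∧ m.x1 ∈ T.I ∧ m.x2 ∈ T.I ∧ m.x1 ≠ m.x2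

/-- Apply a finite sequence of intersection moves (listed in order of application)
to the skew-symmetric map `b`. -/
def applyMoves (s : Fin n → α) : List (MoveDatum α n) → (α → α → H) → (α → α → H)
  | [], b => b
  | m :: ms, b => applyMoves s ms (IMap b (s m.j) m.g m.x1 m.x2)

/-- A finite sequence of intersection moves is applicable to `b`: each move in turn is
applicable to the result of the previous ones. -/
def movesApplicable (s : Fin n → α) : List (MoveDatum α n) → (α → α → H) → Prop
  | [], _ => True
  | m :: ms, b => MoveApplicable m.sq b (s m.j) m.g m.x1 m.x2 ∧
      movesApplicable s ms (IMap b (s m.j) m.g m.x1 m.x2)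

/-- A sequence of intersection moves is reduced if it splits into consecutive blocks,
each block acting on a single element `g` of `G`, with pairwise distinct elements `g`
across blocks, and within each block every element of the weaving set appears in at
most one move. -/
def ReducedMoves (L : List (MoveDatum α n)) : Prop :=
  ∃ Bs : List (List (MoveDatum α n)),
    L = Bs.flatten ∧
    (∀ B ∈ Bs, ∀ m ∈ B, ∀ m' ∈ B, m.g = m'.g) ∧
    Bs.Pairwise (fun B B' => ∀ m ∈ B, ∀ m' ∈ B', m.g ≠ m'.g) ∧
    (∀ B ∈ Bs, ∀ x : α, (B.countP fun m => decide (m.x1 = x ∨ m.x2 = x)) ≤ 1)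

/-- `M_{1,j}`: elementary extension adding a `G j`-annihilating element `g`. -/
def ExtRel1 (T T' : WovenBasedMatrix α H n) : Prop :=
  ∃ (j : Fin n) (g : α), g ∉ T.carrier ∧
    T'.s = T.s ∧ T'.I = T.I ∧ T'.G j = insert g (T.G j) ∧
    (∀ i : Fin n, i ≠ j → T'.G i = T.G i) ∧
    (∀ a ∈ T.carrier, ∀ a' ∈ T.carrier, T'.b a a' = T.b a a') ∧
    (∀ a ∈ T'.carrier, T'.b g a = 0)

/-- `M_{2,j}`: elementary extension adding a `G j`-core element `g`. -/
def ExtRel2 (T T' : WovenBasedMatrix α H n) : Prop :=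
  ∃ (j : Fin n) (g : α), g ∉ T.carrier ∧
    T'.s = T.s ∧ T'.I = T.I ∧ T'.G j = insert g (T.G j) ∧
    (∀ i : Fin n, i ≠ j → T'.G i = T.G i) ∧
    (∀ a ∈ T.carrier, ∀ a' ∈ T.carrier, T'.b a a' = T.b a a') ∧
    (∀ a ∈ T'.carrier, T'.b g a = T'.b (T'.s j) a)

/-- `M_{3,j}`: elementary extension adding a `G j`-complementary pair `g₁, g₂`. -/
def ExtRel3 (T T' : WovenBasedMatrix α H n) : Prop :=
  ∃ (j : Fin n) (g1 g2 : α), g1 ≠ g2 ∧ g1 ∉ T.carrier ∧ g2 ∉ T.carrier ∧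
    T'.s = T.s ∧ T'.I = T.I ∧ T'.G j = insert g1 (insert g2 (T.G j)) ∧
    (∀ i : Fin n, i ≠ j → T'.G i = T.G i) ∧
    (∀ a ∈ T.carrier, ∀ a' ∈ T.carrier, T'.b a a' = T.b a a') ∧
    (∀ a ∈ T'.carrier, T'.b g1 a + T'.b g2 a = T'.b (T'.s j) a)

/-- `M₄`: elementary extension adding a sum-annihilating pair `x₁, x₂` to the
weaving set. -/
def ExtRel4 (T T' : WovenBasedMatrix α H n) : Prop :=
  ∃ (x1 x2 : α), x1 ≠ x2 ∧ x1 ∉ T.carrier ∧ x2 ∉ T.carrier ∧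
    T'.s = T.s ∧ T'.G = T.G ∧ T'.I = insert x1 (insert x2 T.I) ∧
    (∀ a ∈ T.carrier, ∀ a' ∈ T.carrier, T'.b a a' = T.b a a') ∧
    (∀ a ∈ T'.carrier, T'.b x1 a + T'.b x2 a = 0)

/-- `T'` is obtained from `T` by a single elementary extension; the inverse elementary
extensions are given by the reversed relation. -/
def ExtRel (T T' : WovenBasedMatrix α H n) : Prop :=
  ExtRel1 T T' ∨ ExtRel2 T T' ∨ ExtRel3 T T' ∨ ExtRel4 T T'

/-- `T'` is obtained from `T` by the elementary extension `M_k` (`k ∈ {1,2,3,4}`). -/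
def ExtRelAt (k : ℕ) (T T' : WovenBasedMatrix α H n) : Prop :=
  match k with
  | 1 => ExtRel1 T T'
  | 2 => ExtRel2 T T'
  | 3 => ExtRel3 T T'
  | 4 => ExtRel4 T T'
  | _ => False

/-- Isomorphism of woven based matrices: a bijection of the underlying sets together with
a permutation of the indices, matching base elements, parts, weaving sets and pairings. -/
def IsoRel (T T' : WovenBasedMatrix α H n) : Prop :=
  ∃ (Φ : α → α) (σ : Equiv.Perm (Fin n)),
    Set.BijOn Φ ↑T.carrier ↑T'.carrier ∧
    (∀ i, Φ (T.s i) = T'.s (σ i)) ∧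
    (∀ i, (T.G i).image Φ = T'.G (σ i)) ∧
    T.I.image Φ = T'.I ∧
    (∀ a ∈ T.carrier, ∀ a' ∈ T.carrier, T'.b (Φ a) (Φ a') = T.b a a')

/-- `T'` is obtained from `T` by a single intersection move. -/
def IMoveRel (T T' : WovenBasedMatrix α H n) : Prop :=
  ∃ m : MoveDatum α n, m.valid T ∧
    MoveApplicable m.sq T.b (T.s m.j) m.g m.x1 m.x2 ∧
    T'.G = T.G ∧ T'.I = T.I ∧ T'.s = T.s ∧
    (∀ a ∈ T.carrier, ∀ a' ∈ T.carrier,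
      T'.b a a' = IMap T.b (T.s m.j) m.g m.x1 m.x2 a a')

/-- `T` and `T'` are equal woven based matrices (same parts, base elements, weaving set
and the same pairing on the underlying set). -/
def WBMEq (T T' : WovenBasedMatrix α H n) : Prop :=
  T'.G = T.G ∧ T'.I = T.I ∧ T'.s = T.s ∧
  ∀ a ∈ T.carrier, ∀ a' ∈ T.carrier, T'.b a a' = T.b a a'

/-- One step of the homology relation: an elementary extension, an inverse elementary
extension, an intersection move, or an isomorphism. -/
def HomStep (T T' : WovenBasedMatrix α H n) : Prop :=
  ExtRel T T' ∨ ExtRel T' T ∨ IMoveRel T T' ∨ IsoRel T T'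

/-- Two woven based matrices are homologous if they are related by a finite sequence of
elementary extensions and their inverses, intersection moves, and isomorphisms. -/
def Homologous : WovenBasedMatrix α H n → WovenBasedMatrix α H n → Prop :=
  Relation.ReflTransGen HomStep

/-- No inverse elementary extension applies to `T`: there is no `G i`-annihilating
element, no `G i`-core element, no `G i`-complementary pair, and no sum-annihilating
pair in the weaving set. -/
def NoInverseExtension (T : WovenBasedMatrix α H n) : Prop :=
  (∀ i : Fin n, ∀ g ∈ T.G i, g ≠ T.s i → ¬ (∀ a ∈ T.carrier, T.b g a = 0)) ∧
  (∀ i : Fin n, ∀ g ∈ T.G i, g ≠ T.s i →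
    ¬ (∀ a ∈ T.carrier, T.b g a = T.b (T.s i) a)) ∧
  (∀ i : Fin n, ∀ g1 ∈ T.G i, ∀ g2 ∈ T.G i, g1 ≠ T.s i → g2 ≠ T.s i → g1 ≠ g2 →
    ¬ (∀ a ∈ T.carrier, T.b g1 a + T.b g2 a = T.b (T.s i) a)) ∧
  (∀ x1 ∈ T.I, ∀ x2 ∈ T.I, x1 ≠ x2 → ¬ (∀ a ∈ T.carrier, T.b x1 a + T.b x2 a = 0))

/-- A woven based matrix is primitive if after every finite sequence of intersection
moves, no inverse elementary extension can be applied. -/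
def Primitive (T : WovenBasedMatrix α H n) : Prop :=
  ∀ T' : WovenBasedMatrix α H n, Relation.ReflTransGen IMoveRel T T' →
    NoInverseExtension T'


/-! ### Auxiliary development for the reduction of sequences of intersection moves -/

section ReductionProofAux

set_option maxHeartbeats 2000000

open List

/-! #### Pointwise lemmas about `IMap` -/

lemma IMap_gx {b : α → α → H} {s g x1 x2 y : α} (h : y = x1 ∨ y = x2) :
    IMap b s g x1 x2 g y = b s y - b g y := by
  rcases h with rfl | rfl <;> simp [IMap]

lemma IMap_off {b : α → α → H} {s g x1 x2 a a' : α}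
    (h1 : ¬(a = g ∧ (a' = x1 ∨ a' = x2))) (h2 : ¬(a' = g ∧ (a = x1 ∨ a = x2))) :
    IMap b s g x1 x2 a a' = b a a' := by
  simp only [IMap]
  rw [if_neg h1, if_neg h2]

lemma IMap_swap (b : α → α → H) (s g x1 x2 : α) :
    IMap b s g x1 x2 = IMap b s g x2 x1 := by
  funext a a'
  simp only [IMap]
  split_ifs <;> first | rfl | tauto

lemma IMap_cancel_raw {b : α → α → H} {s g x1 x2 : α}
    (h12 : x1 ≠ x2) (hg1 : g ≠ x1) (hg2 : g ≠ x2)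
    (hs : s ≠ g) (hs1 : s ≠ x1) (hs2 : s ≠ x2) :
    IMap (IMap b s g x1 x2) s g x1 x2 = b := by
  funext a a'
  simp only [IMap]
  split_ifs <;> simp_all <;> casesm* _ ∨ _ <;> simp_all <;> abel

lemma IMap_merge_raw {b : α → α → H} {s g x1 x2 x3 : α}
    (h12 : x1 ≠ x2) (h13 : x1 ≠ x3) (h23 : x2 ≠ x3)
    (hg1 : g ≠ x1) (hg2 : g ≠ x2) (hg3 : g ≠ x3)
    (hs : s ≠ g) (hs1 : s ≠ x1) (hs2 : s ≠ x2) (hs3 : s ≠ x3) :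
    IMap (IMap b s g x1 x2) s g x2 x3 = IMap b s g x1 x3 := by
  funext a a'
  simp only [IMap]
  split_ifs <;> simp_all <;> casesm* _ ∨ _ <;> simp_all <;> abel

lemma IMap_comm_diffg {b : α → α → H} {s s' g g' x1 x2 y1 y2 : α}
    (hgx1 : g ≠ x1) (hgx2 : g ≠ x2) (hgy1 : g ≠ y1) (hgy2 : g ≠ y2)
    (hg'x1 : g' ≠ x1) (hg'x2 : g' ≠ x2) (hg'y1 : g' ≠ y1) (hg'y2 : g' ≠ y2)
    (hsg' : s ≠ g') (hs'g : s' ≠ g) (hsy1 : s ≠ y1) (hsy2 : s ≠ y2)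
    (hs'x1 : s' ≠ x1) (hs'x2 : s' ≠ x2)
    (hgg : g ≠ g') :
    IMap (IMap b s g x1 x2) s' g' y1 y2 = IMap (IMap b s' g' y1 y2) s g x1 x2 := by
  funext a a'
  simp only [IMap]
  split_ifs <;> simp_all <;> casesm* _ ∨ _ <;> simp_all <;> abel

lemma IMap_comm_sameg {b : α → α → H} {s g x1 x2 y1 y2 : α}
    (hgx1 : g ≠ x1) (hgx2 : g ≠ x2) (hgy1 : g ≠ y1) (hgy2 : g ≠ y2)
    (hsg : s ≠ g) (hsy1 : s ≠ y1) (hsy2 : s ≠ y2) (hsx1 : s ≠ x1) (hsx2 : s ≠ x2)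
    (hd1 : y1 ≠ x1) (hd2 : y1 ≠ x2) (hd3 : y2 ≠ x1) (hd4 : y2 ≠ x2) :
    IMap (IMap b s g x1 x2) s g y1 y2 = IMap (IMap b s g y1 y2) s g x1 x2 := by
  funext a a'
  simp only [IMap]
  split_ifs <;> simp_all <;> casesm* _ ∨ _ <;> simp_all <;> abel

/-! #### Lemmas about `MoveApplicable` -/

lemma MoveApplicable_swap {k : Fin 2} {b : α → α → H} {s g x1 x2 : α}
    (h : MoveApplicable k b s g x1 x2) : MoveApplicable k b s g x2 x1 := by
  unfold MoveApplicable IsGAnn IsGUnequal at h ⊢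
  by_cases hk : k = 0
  · rw [if_pos hk] at h ⊢
    exact ⟨by rw [add_comm]; exact h.1, by rw [add_comm]; exact h.2⟩
  · rw [if_neg hk] at h ⊢
    exact ⟨h.1.symm, h.2.symm⟩

lemma MoveApplicable_congr {k : Fin 2} {b b' : α → α → H} {s g x1 x2 : α}
    (h1 : b g x1 = b' g x1) (h2 : b g x2 = b' g x2)
    (h3 : b s x1 = b' s x1) (h4 : b s x2 = b' s x2) :
    MoveApplicable k b s g x1 x2 ↔ MoveApplicable k b' s g x1 x2 := by
  unfold MoveApplicable IsGAnn IsGUnequal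
  rw [h1, h2, h3, h4]

/-! #### The algebraic heart of the merging of two overlapping moves -/

lemma merge_app_core {u1 u2 u3 c1 c2 c3 : H}
    (hw1 : u1 = 0 ∨ u1 = c1) (hw2 : u2 = 0 ∨ u2 = c2) (hw3 : u3 = 0 ∨ u3 = c3)
    (h1 : (u1 + u2 = 0 ∧ c1 + c2 = 0) ∨ (u1 ≠ u2 ∧ c1 = c2))
    (h2 : (c2 - u2 + u3 = 0 ∧ c2 + c3 = 0) ∨ (c2 - u2 ≠ u3 ∧ c2 = c3)) :
    (u1 + u3 = 0 ∧ c1 + c3 = 0) ∨ (u1 ≠ u3 ∧ c1 = c3) := by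
  have hsum : ∀ {a b c : H}, (a = 0 ∨ a = c) → (b = 0 ∨ b = c) → a ≠ b → a + b = c := by
    rintro a b c (rfl | rfl) (rfl | rfl) h <;>
      first | exact absurd rfl h | rw [zero_add] | rw [add_zero]
  rcases h1 with ⟨ha, hc⟩ | ⟨hne, hc⟩
  · rcases h2 with ⟨ha', hc'⟩ | ⟨hne', hc'⟩
    · -- annihilating, annihilating
      have hu1 : u1 = -u2 := eq_neg_of_add_eq_zero_left ha
      have hu3 : u3 = u2 - c2 := by
        have h' : u3 = -(c2 - u2) := eq_neg_of_add_eq_zero_right ha'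
        rw [h', neg_sub]
      have hc1 : c1 = -c2 := eq_neg_of_add_eq_zero_left hc
      have hc3 : c3 = -c2 := eq_neg_of_add_eq_zero_right hc'
      by_cases h0 : c2 = 0
      · left
        have hu2 : u2 = 0 := by
          rcases hw2 with h | h
          · exact h
          · rw [h, h0]
        constructor
        · rw [hu1, hu3, hu2, h0]; abel
        · rw [hc1, hc3, h0]; abel
      · right
        constructor
        · intro he
          have key : -u2 = u2 - c2 := by rw [← hu1, ← hu3]; exact he
          rcases hw2 with h | h
          · apply h0
            rw [h] at key
            have h2' : (0 : H) = -c2 := by simpa using key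
            exact (neg_eq_zero.mp h2'.symm)
          · apply h0
            rw [h] at key
            have h2' : -c2 = 0 := by simpa using key
            exact neg_eq_zero.mp h2'
        · rw [hc1, hc3]
    · -- annihilating, unequal
      rcases hw2 with h | h
      · -- u2 = 0
        rcases hw3 with h3 | h3
        · -- u3 = 0
          left
          constructor
          · rw [h3, add_zero]
            have : u1 = -u2 := by rwa [add_eq_zero_iff_eq_neg] at ha
            rw [this, h, neg_zero]
          · rw [← hc']
            exact hc
        · exfalso
          apply hne'
          rw [h, sub_zero, hc', ← h3]
      · -- u2 = c2
        rcases hw3 with h3 | h3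
        · exfalso
          apply hne'
          rw [h, sub_self, h3]
        · left
          constructor
          · rw [h3, ← hc', ← h]
            exact ha
          · rw [← hc']
            exact hc
  · rcases h2 with ⟨ha', hc'⟩ | ⟨hne', hc'⟩
    · -- unequal, annihilating
      have hw2' : u2 = 0 ∨ u2 = c1 := by rw [hc]; exact hw2
      have hs : u1 + u2 = c1 := hsum hw1 hw2' hne
      have hu3 : u3 = u2 - c2 := by
        have h' : u3 = -(c2 - u2) := eq_neg_of_add_eq_zero_right ha'
        rw [h', neg_sub]
      left
      constructor
      · rw [hu3, ← hc, ← hs]; abel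
      · rw [hc]; exact hc'
    · -- unequal, unequal
      have hw2' : u2 = 0 ∨ u2 = c1 := by rw [hc]; exact hw2
      have hs : u1 + u2 = c1 := hsum hw1 hw2' hne
      right
      refine ⟨?_, hc.trans hc'⟩
      intro he
      apply hne'
      rw [← he, ← hc, ← hs]
      abel

/-- Merging two overlapping moves on the same `g`: applicability of the merged move. -/
lemma merge_app {b : α → α → H} {s g x1 x2 x3 : α}
    (h12 : x1 ≠ x2) (h13 : x1 ≠ x3) (h23 : x2 ≠ x3)
    (hg2 : g ≠ x2) (hg3 : g ≠ x3) (hs : s ≠ g)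
    (hw1 : b g x1 = 0 ∨ b g x1 = b s x1)
    (hw2 : b g x2 = 0 ∨ b g x2 = b s x2)
    (hw3 : b g x3 = 0 ∨ b g x3 = b s x3)
    {k1 k2 : Fin 2}
    (h1 : MoveApplicable k1 b s g x1 x2)
    (h2 : MoveApplicable k2 (IMap b s g x1 x2) s g x2 x3) :
    ∃ k3 : Fin 2, MoveApplicable k3 b s g x1 x3 := by
  have e2 : IMap b s g x1 x2 g x2 = b s x2 - b g x2 := IMap_gx (Or.inr rfl)
  have e3 : IMap b s g x1 x2 g x3 = b g x3 := by
    refine IMap_off ?_ ?_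
    · rintro ⟨-, h | h⟩
      · exact h13 h.symm
      · exact h23 h.symm
    · rintro ⟨h, -⟩; exact hg3 h.symm
  have es2 : IMap b s g x1 x2 s x2 = b s x2 := by
    refine IMap_off ?_ ?_
    · rintro ⟨h, -⟩; exact hs h
    · rintro ⟨h, -⟩; exact hg2 h.symm
  have es3 : IMap b s g x1 x2 s x3 = b s x3 := by
    refine IMap_off ?_ ?_
    · rintro ⟨h, -⟩; exact hs h
    · rintro ⟨h, -⟩; exact hg3 h.symm
  have H1 : (b g x1 + b g x2 = 0 ∧ b s x1 + b s x2 = 0) ∨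
      (b g x1 ≠ b g x2 ∧ b s x1 = b s x2) := by
    by_cases hk : k1 = 0
    · left
      have := h1
      unfold MoveApplicable IsGAnn at this
      rw [if_pos hk] at this
      exact this
    · right
      have := h1
      unfold MoveApplicable IsGUnequal at this
      rw [if_neg hk] at this
      exact this
  have H2 : (b s x2 - b g x2 + b g x3 = 0 ∧ b s x2 + b s x3 = 0) ∨
      (b s x2 - b g x2 ≠ b g x3 ∧ b s x2 = b s x3) := by
    by_cases hk : k2 = 0
    · left
      have h2' := h2
      unfold MoveApplicable IsGAnn at h2'
      rw [if_pos hk, e2, e3, es2, es3] at h2'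
      exact h2'
    · right
      have h2' := h2
      unfold MoveApplicable IsGUnequal at h2'
      rw [if_neg hk, e2, e3, es2, es3] at h2'
      exact h2'
  rcases merge_app_core hw1 hw2 hw3 H1 H2 with h | h
  · refine ⟨0, ?_⟩
    unfold MoveApplicable IsGAnn
    rw [if_pos rfl]
    exact h
  · refine ⟨1, ?_⟩
    unfold MoveApplicable IsGUnequal
    rw [if_neg (by decide)]
    exact h

/-! #### Basic consequences of validity -/

variable {T : WovenBasedMatrix α H n}

lemma valid_gne_s {m : MoveDatum α n} (hm : m.valid T) (j' : Fin n) : m.g ≠ T.s j' := by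
  intro h
  by_cases hj : j' = m.j
  · exact hm.2.1 (by rw [h, hj])
  · exact Finset.disjoint_left.mp (T.disjointG m.j j' fun he => hj he.symm) hm.1
      (by rw [h]; exact T.s_mem j')

lemma valid_gne_I {m : MoveDatum α n} (hm : m.valid T) {x : α} (hx : x ∈ T.I) : m.g ≠ x :=
  fun h => Finset.disjoint_left.mp (T.disjointI m.j) hm.1 (by rw [h]; exact hx)

lemma sne_I (T : WovenBasedMatrix α H n) (j : Fin n) {x : α} (hx : x ∈ T.I) : T.s j ≠ x :=
  fun h => Finset.disjoint_left.mp (T.disjointI j) (T.s_mem j) (by rw [h]; exact hx)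

lemma valid_j_eq {m m' : MoveDatum α n} (hm : m.valid T) (hm' : m'.valid T)
    (h : m.g = m'.g) : m.j = m'.j := by
  by_contra hj
  exact Finset.disjoint_left.mp (T.disjointG m.j m'.j hj) hm.1 (by rw [h]; exact hm'.1)

/-! #### Uses, disjointness of supports, the move operator -/

/-- `m` uses the weaving element `x`. -/
def Uses (m : MoveDatum α n) (x : α) : Prop := m.x1 = x ∨ m.x2 = x

/-- The supports of `m` and `m'` are disjoint. -/
def XDisj (m m' : MoveDatum α n) : Prop := ∀ x : α, Uses m x → ¬ Uses m' x

lemma XDisj.symm' {m m' : MoveDatum α n} (h : XDisj m m') : XDisj m' m :=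
  fun x hx hx' => h x hx' hx

/-- The operator on pairings induced by the single move `m`. -/
def IM (s : Fin n → α) (m : MoveDatum α n) (b : α → α → H) : α → α → H :=
  IMap b (s m.j) m.g m.x1 m.x2

lemma applyMoves_cons (s : Fin n → α) (m : MoveDatum α n) (ms : List (MoveDatum α n))
    (b : α → α → H) : applyMoves s (m :: ms) b = applyMoves s ms (IM s m b) := rfl

lemma movesApplicable_cons {s : Fin n → α} {m : MoveDatum α n} {ms : List (MoveDatum α n)}
    {b : α → α → H} :
    movesApplicable s (m :: ms) b ↔
      MoveApplicable m.sq b (s m.j) m.g m.x1 m.x2 ∧ movesApplicable s ms (IM s m b) :=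
  Iff.rfl

lemma applyMoves_append (s : Fin n → α) (A B : List (MoveDatum α n)) (b : α → α → H) :
    applyMoves s (A ++ B) b = applyMoves s B (applyMoves s A b) := by
  induction A generalizing b with
  | nil => rfl
  | cons m A ih => simp only [List.cons_append, applyMoves_cons, ih]

lemma movesApplicable_append {s : Fin n → α} {A B : List (MoveDatum α n)} {b : α → α → H} :
    movesApplicable s (A ++ B) b ↔
      movesApplicable s A b ∧ movesApplicable s B (applyMoves s A b) := by
  induction A generalizing b with
  | nil => simp [movesApplicable, applyMoves]
  | cons m A ih =>
    simp only [List.cons_append, movesApplicable_cons, applyMoves_cons, ih, and_assoc]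

/-! #### The weave-value invariant -/

/-- The weave-value invariant: every `g`-value is `0` or the base value. -/
def Hw (T : WovenBasedMatrix α H n) (b : α → α → H) : Prop :=
  ∀ j : Fin n, ∀ g ∈ T.G j, ∀ x ∈ T.I, b g x = 0 ∨ b g x = b (T.s j) x

lemma Hw.start (T : WovenBasedMatrix α H n) : Hw T T.b := T.weave_val

lemma Hw.imap {b : α → α → H} (hb : Hw T b) {m : MoveDatum α n} (hm : m.valid T) :
    Hw T (IM T.s m b) := by
  intro j g hg x hx
  have hxg : ¬ x = m.g := fun h => valid_gne_I hm hx h.symm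
  have hsg : ¬ T.s j = m.g := fun h => valid_gne_s hm j h.symm
  have hsx : IM T.s m b (T.s j) x = b (T.s j) x :=
    IMap_off (fun h => hsg h.1) (fun h => hxg h.1)
  by_cases hgm : g = m.g ∧ (x = m.x1 ∨ x = m.x2)
  · obtain ⟨hg1, hg2⟩ := hgm
    have hj : j = m.j := by
      by_contra hj
      exact Finset.disjoint_left.mp (T.disjointG j m.j hj) hg (by rw [hg1]; exact hm.1)
    have hval : IM T.s m b g x = b (T.s m.j) x - b g x := by
      rw [IM, hg1]
      exact IMap_gx hg2
    rw [hval, hsx, hj]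
    rcases hb m.j g (by rw [hg1]; exact hm.1) x hx with h0 | h0
    · right; rw [h0, sub_zero]
    · left; rw [h0, sub_self]
  · have hval : IM T.s m b g x = b g x := IMap_off hgm (fun h => hxg h.1)
    rw [hval, hsx]
    exact hb j g hg x hx

lemma Hw_applyMoves :
    ∀ (L : List (MoveDatum α n)) (b : α → α → H), (∀ m ∈ L, m.valid T) → Hw T b →
      Hw T (applyMoves T.s L b) := by
  intro L
  induction L with
  | nil => exact fun b _ hb => hb
  | cons m L ih =>
    intro b h hb
    exact ih _ (fun m' hm' => h m' (List.mem_cons_of_mem _ hm'))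
      (hb.imap (h m (List.mem_cons_self)))

/-! #### Commutation of moves -/

lemma IM_comm {m m' : MoveDatum α n} (hm : m.valid T) (hm' : m'.valid T)
    (h : m.g ≠ m'.g ∨ XDisj m m') (b : α → α → H) :
    IM T.s m' (IM T.s m b) = IM T.s m (IM T.s m' b) := by
  have hgx1 : m.g ≠ m.x1 := valid_gne_I hm hm.2.2.1
  have hgx2 : m.g ≠ m.x2 := valid_gne_I hm hm.2.2.2.1
  have hgy1 : m.g ≠ m'.x1 := valid_gne_I hm hm'.2.2.1
  have hgy2 : m.g ≠ m'.x2 := valid_gne_I hm hm'.2.2.2.1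
  have hg'x1 : m'.g ≠ m.x1 := valid_gne_I hm' hm.2.2.1
  have hg'x2 : m'.g ≠ m.x2 := valid_gne_I hm' hm.2.2.2.1
  have hg'y1 : m'.g ≠ m'.x1 := valid_gne_I hm' hm'.2.2.1
  have hg'y2 : m'.g ≠ m'.x2 := valid_gne_I hm' hm'.2.2.2.1
  have hsy1 : T.s m.j ≠ m'.x1 := sne_I T m.j hm'.2.2.1
  have hsy2 : T.s m.j ≠ m'.x2 := sne_I T m.j hm'.2.2.2.1
  have hs'x1 : T.s m'.j ≠ m.x1 := sne_I T m'.j hm.2.2.1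
  have hs'x2 : T.s m'.j ≠ m.x2 := sne_I T m'.j hm.2.2.2.1
  by_cases hgg : m.g = m'.g
  · rcases h with h | h
    · exact absurd hgg h
    · have hj : m.j = m'.j := valid_j_eq hm hm' hgg
      simp only [IM]
      rw [← hj, ← hgg]
      exact IMap_comm_sameg hgx1 hgx2 hgy1 hgy2 ((valid_gne_s hm m.j).symm)
        hsy1 hsy2 (sne_I T m.j hm.2.2.1) (sne_I T m.j hm.2.2.2.1)
        (fun he => h m.x1 (Or.inl rfl) (Or.inl he))
        (fun he => h m.x2 (Or.inr rfl) (Or.inl he))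
        (fun he => h m.x1 (Or.inl rfl) (Or.inr he))
        (fun he => h m.x2 (Or.inr rfl) (Or.inr he))
  · exact IMap_comm_diffg hgx1 hgx2 hgy1 hgy2 hg'x1 hg'x2 hg'y1 hg'y2
      ((valid_gne_s hm' m.j).symm) ((valid_gne_s hm m'.j).symm) hsy1 hsy2 hs'x1 hs'x2 hgg

/-- Applicability of `m'` is unchanged by applying `m`, when `m` and `m'` act on
different `g`'s or have disjoint supports. -/
lemma app_IM_iff {k : Fin 2} {m m' : MoveDatum α n} (hm : m.valid T) (hm' : m'.valid T)
    (h : m.g ≠ m'.g ∨ XDisj m m') (b : α → α → H) :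
    MoveApplicable k (IM T.s m b) (T.s m'.j) m'.g m'.x1 m'.x2 ↔
      MoveApplicable k b (T.s m'.j) m'.g m'.x1 m'.x2 := by
  have key : ∀ y, (y = m'.x1 ∨ y = m'.x2) →
      IM T.s m b m'.g y = b m'.g y ∧ IM T.s m b (T.s m'.j) y = b (T.s m'.j) y := by
    intro y hy
    have hyI : y ∈ T.I := by
      rcases hy with rfl | rfl
      · exact hm'.2.2.1
      · exact hm'.2.2.2.1
    have hyg : ¬ y = m.g := fun he => valid_gne_I hm hyI he.symm
    constructor
    · refine IMap_off ?_ (fun hc => hyg hc.1)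
      rintro ⟨hgg, hy'⟩
      rcases h with h | h
      · exact h hgg.symm
      · exact h y (hy'.imp Eq.symm Eq.symm) (hy.imp Eq.symm Eq.symm)
    · refine IMap_off ?_ (fun hc => hyg hc.1)
      rintro ⟨hsg, -⟩
      exact valid_gne_s hm m'.j hsg.symm
  exact MoveApplicable_congr (key _ (Or.inl rfl)).1 (key _ (Or.inr rfl)).1
    (key _ (Or.inl rfl)).2 (key _ (Or.inr rfl)).2

/-- Pushing a single move through a list of moves which all commute with it. -/
lemma push_list {m0 : MoveDatum α n} (hm0 : m0.valid T) :
    ∀ (L : List (MoveDatum α n)), (∀ m ∈ L, m.valid T ∧ (m0.g ≠ m.g ∨ XDisj m0 m)) →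
    ∀ b : α → α → H,
      (applyMoves T.s L (IM T.s m0 b) = IM T.s m0 (applyMoves T.s L b)) ∧
      (movesApplicable T.s L (IM T.s m0 b) ↔ movesApplicable T.s L b) ∧
      (∀ k : Fin 2, (MoveApplicable k (applyMoves T.s L b) (T.s m0.j) m0.g m0.x1 m0.x2 ↔
        MoveApplicable k b (T.s m0.j) m0.g m0.x1 m0.x2)) := by
  intro L
  induction L with
  | nil => exact fun _ b => ⟨rfl, Iff.rfl, fun _ => Iff.rfl⟩
  | cons m L ih =>
    intro h b
    obtain ⟨hmv, hmc⟩ := h m (List.mem_cons_self)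
    have hrest := fun m' hm' => h m' (List.mem_cons_of_mem _ hm')
    have hcomm : IM T.s m (IM T.s m0 b) = IM T.s m0 (IM T.s m b) := IM_comm hm0 hmv hmc b
    have hmc' : m.g ≠ m0.g ∨ XDisj m m0 := by
      rcases hmc with h' | h'
      · exact Or.inl h'.symm
      · exact Or.inr h'.symm'
    refine ⟨?_, ?_, ?_⟩
    · show applyMoves T.s L (IM T.s m (IM T.s m0 b)) = _
      rw [hcomm, (ih hrest (IM T.s m b)).1]
      rfl
    · rw [movesApplicable_cons, movesApplicable_cons]
      constructor
      · rintro ⟨h1, h2⟩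
        refine ⟨(app_IM_iff hm0 hmv hmc b).mp h1, ?_⟩
        rw [hcomm] at h2
        exact (ih hrest (IM T.s m b)).2.1.mp h2
      · rintro ⟨h1, h2⟩
        refine ⟨(app_IM_iff hm0 hmv hmc b).mpr h1, ?_⟩
        rw [hcomm]
        exact (ih hrest (IM T.s m b)).2.1.mpr h2
    · intro k
      show MoveApplicable k (applyMoves T.s L (IM T.s m b)) _ _ _ _ ↔ _
      rw [(ih hrest (IM T.s m b)).2.2 k]
      exact app_IM_iff hmv hm0 hmc' b

/-- Pulling all moves acting on `g0` to the front of an applicable sequence. -/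
lemma pullFront (g0 : α) :
    ∀ (L : List (MoveDatum α n)) (b : α → α → H), (∀ m ∈ L, m.valid T) →
      movesApplicable T.s L b →
      ∃ L₁ L₂ : List (MoveDatum α n),
        (∀ m ∈ L₁, m ∈ L ∧ m.g = g0) ∧ (∀ m ∈ L₂, m ∈ L ∧ m.g ≠ g0) ∧
        L₂.length ≤ L.length ∧
        movesApplicable T.s (L₁ ++ L₂) b ∧
        applyMoves T.s (L₁ ++ L₂) b = applyMoves T.s L b := by
  intro L
  induction L with
  | nil =>
    intro b _ _
    exact ⟨[], [], by simp, by simp, by simp, trivial, rfl⟩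
  | cons m L ih =>
    intro b hv happ
    obtain ⟨h1, h2⟩ := happ
    have hm : m.valid T := hv m (List.mem_cons_self)
    obtain ⟨L₁, L₂, hL₁, hL₂, hlen, happ', heq'⟩ :=
      ih (IM T.s m b) (fun m' h => hv m' (List.mem_cons_of_mem _ h)) h2
    by_cases hg : m.g = g0
    · refine ⟨m :: L₁, L₂, ?_, ?_, ?_, ⟨h1, happ'⟩, ?_⟩
      · intro m' h
        rcases List.mem_cons.mp h with rfl | h
        · exact ⟨List.mem_cons_self, hg⟩
        · exact ⟨List.mem_cons_of_mem _ (hL₁ m' h).1, (hL₁ m' h).2⟩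
      · exact fun m' h => ⟨List.mem_cons_of_mem _ (hL₂ m' h).1, (hL₂ m' h).2⟩
      · exact le_trans hlen (Nat.le_succ _)
      · show applyMoves T.s (L₁ ++ L₂) (IM T.s m b) = _
        rw [heq']
        rfl
    · have hsep : ∀ m' ∈ L₁, m'.valid T ∧ (m.g ≠ m'.g ∨ XDisj m m') := by
        intro m' h
        refine ⟨hv m' (List.mem_cons_of_mem _ (hL₁ m' h).1), Or.inl ?_⟩
        rw [(hL₁ m' h).2]
        exact hg
      obtain ⟨Pc, Pa, Pm⟩ := push_list hm L₁ hsep b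
      obtain ⟨hA, hB⟩ := movesApplicable_append.mp happ'
      refine ⟨L₁, m :: L₂, ?_, ?_, ?_, ?_, ?_⟩
      · exact fun m' h => ⟨List.mem_cons_of_mem _ (hL₁ m' h).1, (hL₁ m' h).2⟩
      · intro m' h
        rcases List.mem_cons.mp h with rfl | h
        · exact ⟨List.mem_cons_self, hg⟩
        · exact ⟨List.mem_cons_of_mem _ (hL₂ m' h).1, (hL₂ m' h).2⟩
      · simpa using Nat.succ_le_succ hlen
      · rw [movesApplicable_append]
        refine ⟨Pa.mp hA, ?_⟩
        rw [movesApplicable_cons]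
        refine ⟨(Pm m.sq).mpr h1, ?_⟩
        show movesApplicable T.s L₂ (IM T.s m (applyMoves T.s L₁ b))
        rw [← Pc]
        exact hB
      · rw [applyMoves_append, applyMoves_cons]
        show applyMoves T.s L₂ (IM T.s m (applyMoves T.s L₁ b)) = _
        rw [← Pc]
        have : applyMoves T.s L₂ (applyMoves T.s L₁ (IM T.s m b))
            = applyMoves T.s (L₁ ++ L₂) (IM T.s m b) := (applyMoves_append _ _ _ _).symm
        rw [this, heq']
        rfl

/-- Core of the collision step: cancel or merge two overlapping moves on the same `g`,
in normalized position. -/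
lemma collide_main {m b0 : MoveDatum α n} {p x r : α} (hm : m.valid T) (hb0 : b0.valid T)
    {b : α → α → H} (hw : Hw T b)
    (hpI : p ∈ T.I) (hxI : x ∈ T.I) (hrI : r ∈ T.I)
    (hpx : p ≠ x) (hxr : x ≠ r)
    (hup : Uses m p) (hur : Uses b0 r)
    (hIMm : IM T.s m b = IMap b (T.s m.j) m.g p x)
    (hIMb0 : IM T.s b0 (IM T.s m b) = IMap (IM T.s m b) (T.s m.j) m.g x r)
    (h1 : MoveApplicable m.sq b (T.s m.j) m.g p x)
    (h2 : MoveApplicable b0.sq (IM T.s m b) (T.s m.j) m.g x r) :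
    (IM T.s b0 (IM T.s m b) = b) ∨
    ∃ m' : MoveDatum α n, m'.valid T ∧ m'.g = m.g ∧ m'.j = m.j ∧
      MoveApplicable m'.sq b (T.s m'.j) m'.g m'.x1 m'.x2 ∧
      IM T.s b0 (IM T.s m b) = IM T.s m' b ∧
      (∀ y, Uses m' y → Uses m y ∨ Uses b0 y) := by
  have hgp : m.g ≠ p := valid_gne_I hm hpI
  have hgx : m.g ≠ x := valid_gne_I hm hxI
  have hgr : m.g ≠ r := valid_gne_I hm hrI
  have hsg : T.s m.j ≠ m.g := (valid_gne_s hm m.j).symm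
  have hsp : T.s m.j ≠ p := sne_I T m.j hpI
  have hsx : T.s m.j ≠ x := sne_I T m.j hxI
  have hsr : T.s m.j ≠ r := sne_I T m.j hrI
  by_cases hpr : p = r
  · left
    subst hpr
    rw [hIMb0, hIMm, IMap_swap _ (T.s m.j) m.g x p]
    exact IMap_cancel_raw hpx hgp hgx hsg hsp hsx
  · right
    have hh2 : MoveApplicable b0.sq (IMap b (T.s m.j) m.g p x) (T.s m.j) m.g x r := by
      rw [← hIMm]; exact h2
    obtain ⟨k3, hk3⟩ := merge_app hpx hpr hxr hgx hgr hsg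
      (hw m.j m.g hm.1 p hpI) (hw m.j m.g hm.1 x hxI) (hw m.j m.g hm.1 r hrI) h1 hh2
    refine ⟨⟨m.j, k3, m.g, p, r⟩, ⟨hm.1, hm.2.1, hpI, hrI, hpr⟩, rfl, rfl, hk3, ?_, ?_⟩
    · rw [hIMb0, hIMm]
      show IMap (IMap b (T.s m.j) m.g p x) (T.s m.j) m.g x r = IMap b (T.s m.j) m.g p r
      exact IMap_merge_raw hpx hpr hxr hgp hgx hgr hsg hsp hsx hsr
    · intro y hy
      rcases hy with rfl | rfl
      · exact Or.inl hup
      · exact Or.inr hur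

/-- The collision step: two consecutive moves on the same `g` sharing a weaving element
either cancel or merge into a single move. -/
lemma collide_step {m b0 : MoveDatum α n} (hm : m.valid T) (hb0 : b0.valid T)
    (hg : b0.g = m.g) (hj : b0.j = m.j) {b : α → α → H} (hw : Hw T b)
    (h1 : MoveApplicable m.sq b (T.s m.j) m.g m.x1 m.x2)
    (h2 : MoveApplicable b0.sq (IM T.s m b) (T.s b0.j) b0.g b0.x1 b0.x2)
    {x : α} (hux : Uses m x) (hub : Uses b0 x) :
    (IM T.s b0 (IM T.s m b) = b) ∨
    ∃ m' : MoveDatum α n, m'.valid T ∧ m'.g = m.g ∧ m'.j = m.j ∧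
      MoveApplicable m'.sq b (T.s m'.j) m'.g m'.x1 m'.x2 ∧
      IM T.s b0 (IM T.s m b) = IM T.s m' b ∧
      (∀ y, Uses m' y → Uses m y ∨ Uses b0 y) := by
  rw [hg, hj] at h2
  have hxI : x ∈ T.I := by
    rcases hux with rfl | rfl
    · exact hm.2.2.1
    · exact hm.2.2.2.1
  rcases hux with hx1 | hx2 <;> rcases hub with hy1 | hy2
  · -- m.x1 = x, b0.x1 = x : p = m.x2, r = b0.x2
    refine collide_main hm hb0 hw hm.2.2.2.1 hxI hb0.2.2.2.1
      (by rw [← hx1]; exact hm.2.2.2.2.symm) (by rw [← hy1]; exact hb0.2.2.2.2)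
      (Or.inr rfl) (Or.inr rfl) ?_ ?_ ?_ ?_
    · rw [IM, IMap_swap b (T.s m.j) m.g m.x1 m.x2, hx1]
    · rw [IM, hg, hj, ← hy1]
    · rw [← hx1]
      exact MoveApplicable_swap h1
    · rw [← hy1]
      exact h2
  · -- m.x1 = x, b0.x2 = x : p = m.x2, r = b0.x1
    refine collide_main hm hb0 hw hm.2.2.2.1 hxI hb0.2.2.1
      (by rw [← hx1]; exact hm.2.2.2.2.symm) (by rw [← hy2]; exact hb0.2.2.2.2.symm)
      (Or.inr rfl) (Or.inl rfl) ?_ ?_ ?_ ?_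
    · rw [IM, IMap_swap b (T.s m.j) m.g m.x1 m.x2, hx1]
    · rw [IM, hg, hj, IMap_swap (IM T.s m b) (T.s m.j) m.g b0.x1 b0.x2, hy2]
    · rw [← hx1]
      exact MoveApplicable_swap h1
    · rw [← hy2]
      exact MoveApplicable_swap h2
  · -- m.x2 = x, b0.x1 = x : p = m.x1, r = b0.x2
    refine collide_main hm hb0 hw hm.2.2.1 hxI hb0.2.2.2.1
      (by rw [← hx2]; exact hm.2.2.2.2) (by rw [← hy1]; exact hb0.2.2.2.2)
      (Or.inl rfl) (Or.inr rfl) ?_ ?_ ?_ ?_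
    · rw [IM, hx2]
    · rw [IM, hg, hj, ← hy1]
    · rw [← hx2]
      exact h1
    · rw [← hy1]
      exact h2
  · -- m.x2 = x, b0.x2 = x : p = m.x1, r = b0.x1
    refine collide_main hm hb0 hw hm.2.2.1 hxI hb0.2.2.1
      (by rw [← hx2]; exact hm.2.2.2.2) (by rw [← hy2]; exact hb0.2.2.2.2.symm)
      (Or.inl rfl) (Or.inl rfl) ?_ ?_ ?_ ?_
    · rw [IM, hx2]
    · rw [IM, hg, hj, IMap_swap (IM T.s m b) (T.s m.j) m.g b0.x1 b0.x2, hy2]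
    · rw [← hx2]
      exact h1
    · rw [← hy2]
      exact MoveApplicable_swap h2

/-- Inserting one move in front of a reduced block on the same `g`. -/
lemma insertFront :
    ∀ (B : List (MoveDatum α n)) (m : MoveDatum α n) (b : α → α → H),
      m.valid T →
      (∀ m' ∈ B, m'.valid T ∧ m'.g = m.g ∧ m'.j = m.j) →
      B.Pairwise XDisj →
      Hw T b →
      MoveApplicable m.sq b (T.s m.j) m.g m.x1 m.x2 →
      movesApplicable T.s B (IM T.s m b) →
      ∃ B' : List (MoveDatum α n),
        (∀ m' ∈ B', m'.valid T ∧ m'.g = m.g ∧ m'.j = m.j) ∧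
        B'.Pairwise XDisj ∧
        (∀ m' ∈ B', ∀ y, Uses m' y → Uses m y ∨ ∃ m'' ∈ B, Uses m'' y) ∧
        movesApplicable T.s B' b ∧
        applyMoves T.s B' b = applyMoves T.s B (IM T.s m b) := by
  intro B
  induction B with
  | nil =>
    intro m b hm _ _ _ h1 _
    exact ⟨[m], by simp [hm], by simp, fun m' hm' y hy => by
      simp only [List.mem_singleton] at hm'; subst hm'; exact Or.inl hy,
      ⟨h1, trivial⟩, rfl⟩
  | cons b0 Q ih =>
    intro m b hm hB hp hw h1 h2
    obtain ⟨hb0v, hb0g, hb0j⟩ := hB b0 (List.mem_cons_self)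
    have hQB : ∀ m' ∈ Q, m'.valid T ∧ m'.g = m.g ∧ m'.j = m.j :=
      fun m' h => hB m' (List.mem_cons_of_mem _ h)
    obtain ⟨hb0Q, hQp⟩ := List.pairwise_cons.mp hp
    rw [movesApplicable_cons] at h2
    obtain ⟨h2a, h2b⟩ := h2
    by_cases hd : XDisj m b0
    · -- commute `m` past `b0`
      have hcomm : IM T.s b0 (IM T.s m b) = IM T.s m (IM T.s b0 b) :=
        IM_comm hm hb0v (Or.inr hd) b
      have hmb1 : MoveApplicable m.sq (IM T.s b0 b) (T.s m.j) m.g m.x1 m.x2 :=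
        (app_IM_iff hb0v hm (Or.inr hd.symm') b).mpr h1
      have hb0b : MoveApplicable b0.sq b (T.s b0.j) b0.g b0.x1 b0.x2 :=
        (app_IM_iff hm hb0v (Or.inr hd) b).mp h2a
      have hwb1 : Hw T (IM T.s b0 b) := hw.imap hb0v
      have hQapp : movesApplicable T.s Q (IM T.s m (IM T.s b0 b)) := by
        rw [← hcomm]; exact h2b
      obtain ⟨Q2, hQ21, hQ22, hQ23, hQ24, hQ25⟩ :=
        ih m (IM T.s b0 b) hm hQB hQp hwb1 hmb1 hQapp
      refine ⟨b0 :: Q2, ?_, ?_, ?_, ⟨hb0b, hQ24⟩, ?_⟩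
      · intro m' hm'
        rcases List.mem_cons.mp hm' with rfl | h
        · exact ⟨hb0v, hb0g, hb0j⟩
        · exact hQ21 m' h
      · rw [List.pairwise_cons]
        refine ⟨?_, hQ22⟩
        intro m' hm' y hy hy'
        rcases hQ23 m' hm' y hy' with hu | ⟨m2, hm2, hu⟩
        · exact hd y hu hy
        · exact hb0Q m2 hm2 y hy hu
      · intro m' hm' y hy
        rcases List.mem_cons.mp hm' with h | h
        · exact Or.inr ⟨b0, List.mem_cons_self, h ▸ hy⟩
        · rcases hQ23 m' h y hy with h' | ⟨m2, hm2, hu⟩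
          · exact Or.inl h'
          · exact Or.inr ⟨m2, List.mem_cons_of_mem _ hm2, hu⟩
      · show applyMoves T.s Q2 (IM T.s b0 b) = applyMoves T.s Q (IM T.s b0 (IM T.s m b))
        rw [hQ25, hcomm]
    · -- collision with `b0`
      have hex : ∃ x, Uses m x ∧ Uses b0 x := by
        by_contra hc
        push_neg at hc
        exact hd fun x hx => hc x hx
      obtain ⟨x, hux, hub⟩ := hex
      rcases collide_step hm hb0v hb0g hb0j hw h1 h2a hux hub with
        hcan | ⟨mn, hmnv, hmng, hmnj, hmnapp, hmap, hmnuses⟩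
      · -- cancellation
        refine ⟨Q, hQB, hQp, ?_, ?_, ?_⟩
        · exact fun m' h y hy => Or.inr ⟨m', List.mem_cons_of_mem _ h, hy⟩
        · rw [hcan] at h2b
          exact h2b
        · show applyMoves T.s Q b = applyMoves T.s Q (IM T.s b0 (IM T.s m b))
          rw [hcan]
      · -- merged move `mn`
        have hQapp : movesApplicable T.s Q (IM T.s mn b) := by
          rw [hmap] at h2b
          exact h2b
        have hQB' : ∀ m2 ∈ Q, m2.valid T ∧ m2.g = mn.g ∧ m2.j = mn.j := by
          intro m2 h
          obtain ⟨a, bg, cj⟩ := hQB m2 h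
          exact ⟨a, bg.trans hmng.symm, cj.trans hmnj.symm⟩
        obtain ⟨Q2, hQ21, hQ22, hQ23, hQ24, hQ25⟩ :=
          ih mn b hmnv hQB' hQp hw hmnapp hQapp
        refine ⟨Q2, ?_, hQ22, ?_, hQ24, ?_⟩
        · intro m2 h
          obtain ⟨a, bg, cj⟩ := hQ21 m2 h
          exact ⟨a, bg.trans hmng, cj.trans hmnj⟩
        · intro m2 h y hy
          rcases hQ23 m2 h y hy with h' | ⟨m3, hm3, hu⟩
          · rcases hmnuses y h' with h2' | h2'
            · exact Or.inl h2'
            · exact Or.inr ⟨b0, List.mem_cons_self, h2'⟩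
          · exact Or.inr ⟨m3, List.mem_cons_of_mem _ hm3, hu⟩
        · show applyMoves T.s Q2 b = applyMoves T.s Q (IM T.s b0 (IM T.s m b))
          rw [hQ25, hmap]

/-- Reducing a sequence of moves which all act on the same `g`. -/
lemma blockReduce :
    ∀ (L : List (MoveDatum α n)) (g0 : α) (j0 : Fin n) (b : α → α → H),
      (∀ m ∈ L, m.valid T ∧ m.g = g0 ∧ m.j = j0) → Hw T b → movesApplicable T.s L b →
      ∃ B : List (MoveDatum α n),
        (∀ m ∈ B, m.valid T ∧ m.g = g0 ∧ m.j = j0) ∧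
        B.Pairwise XDisj ∧
        movesApplicable T.s B b ∧
        applyMoves T.s B b = applyMoves T.s L b := by
  intro L
  induction L with
  | nil => exact fun g0 j0 b _ _ _ => ⟨[], by simp, by simp, trivial, rfl⟩
  | cons m L ih =>
    intro g0 j0 b hval hw happ
    obtain ⟨hm, hmg, hmj⟩ := hval m (List.mem_cons_self)
    obtain ⟨B1, hB1v, hB1p, hB1a, hB1e⟩ :=
      ih g0 j0 (IM T.s m b) (fun m' h => hval m' (List.mem_cons_of_mem _ h))
        (hw.imap hm) happ.2
    obtain ⟨B', h1, h2, _h3, h4, h5⟩ := insertFront B1 m b hm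
      (fun m' h => by
        obtain ⟨a, bg, cj⟩ := hB1v m' h
        exact ⟨a, bg.trans hmg.symm, cj.trans hmj.symm⟩)
      hB1p hw happ.1 hB1a
    refine ⟨B', ?_, h2, h4, ?_⟩
    · intro m' h
      obtain ⟨a, bg, cj⟩ := h1 m' h
      exact ⟨a, bg.trans hmg, cj.trans hmj⟩
    · rw [h5, hB1e]
      rfl

/-- The main induction: any applicable sequence of moves can be replaced by a reduced
block sequence with the same composite effect. -/
lemma key_reduction :
    ∀ (N : ℕ) (L : List (MoveDatum α n)) (b : α → α → H), L.length ≤ N →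
      (∀ m ∈ L, m.valid T) → Hw T b → movesApplicable T.s L b →
      ∃ Bs : List (List (MoveDatum α n)),
        (∀ m ∈ Bs.flatten, m.valid T) ∧
        (∀ m ∈ Bs.flatten, ∃ m' ∈ L, m.g = m'.g) ∧
        movesApplicable T.s Bs.flatten b ∧
        applyMoves T.s Bs.flatten b = applyMoves T.s L b ∧
        (∀ B ∈ Bs, ∀ m ∈ B, ∀ m' ∈ B, m.g = m'.g) ∧
        Bs.Pairwise (fun B B' => ∀ m ∈ B, ∀ m' ∈ B', m.g ≠ m'.g) ∧
        (∀ B ∈ Bs, B.Pairwise XDisj) := by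
  intro N
  induction N with
  | zero =>
    intro L b hL _ _ _
    have : L = [] := List.eq_nil_of_length_eq_zero (Nat.le_zero.mp hL)
    subst this
    exact ⟨[], by simp, by simp, trivial, rfl, by simp, List.Pairwise.nil, by simp⟩
  | succ N ih =>
    intro L b hL hv hw happ
    match L, hL, hv, happ with
    | [], _, _, _ =>
      exact ⟨[], by simp, by simp, trivial, rfl, by simp, List.Pairwise.nil, by simp⟩
    | m :: L', hL, hv, happ =>
      rw [movesApplicable_cons] at happ
      obtain ⟨h1, h2⟩ := happ
      have hm : m.valid T := hv m (List.mem_cons_self)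
      obtain ⟨L₁, L₂, hL₁, hL₂, hlen, happ', heq'⟩ :=
        pullFront m.g L' (IM T.s m b) (fun m' h => hv m' (List.mem_cons_of_mem _ h)) h2
      have hFv : ∀ m' ∈ m :: L₁, m'.valid T ∧ m'.g = m.g ∧ m'.j = m.j := by
        intro m' h
        rcases List.mem_cons.mp h with h | h
        · subst h; exact ⟨hm, rfl, rfl⟩
        · have hval' := hv _ (List.mem_cons_of_mem _ (hL₁ m' h).1)
          exact ⟨hval', (hL₁ m' h).2, valid_j_eq hval' hm (hL₁ m' h).2⟩
      obtain ⟨hA, hB⟩ := movesApplicable_append.mp happ'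
      have happF : movesApplicable T.s (m :: L₁) b := by
        rw [movesApplicable_cons]
        exact ⟨h1, hA⟩
      obtain ⟨B, hBv, hBp, hBa, hBe⟩ := blockReduce (m :: L₁) m.g m.j b hFv hw happF
      have hBe' : applyMoves T.s B b = applyMoves T.s L₁ (IM T.s m b) := hBe
      have hwB : Hw T (applyMoves T.s B b) :=
        Hw_applyMoves B b (fun m' h => (hBv m' h).1) hw
      have happL₂ : movesApplicable T.s L₂ (applyMoves T.s B b) := by
        rw [hBe']
        exact hB
      have hlen' : L₂.length ≤ N := by
        have : L'.length ≤ N := by simpa using Nat.succ_le_succ_iff.mp hL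
        exact le_trans hlen this
      obtain ⟨Bs', k1, k2, k3, k4, k5, k6, k7⟩ :=
        ih L₂ (applyMoves T.s B b) hlen'
          (fun m' h => hv _ (List.mem_cons_of_mem _ (hL₂ m' h).1)) hwB happL₂
      refine ⟨B :: Bs', ?_, ?_, ?_, ?_, ?_, ?_, ?_⟩
      · intro m' h
        rw [List.flatten_cons, List.mem_append] at h
        rcases h with h | h
        · exact (hBv m' h).1
        · exact k1 m' h
      · intro m' h
        rw [List.flatten_cons, List.mem_append] at h
        rcases h with h | h
        · exact ⟨m, List.mem_cons_self, (hBv m' h).2.1⟩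
        · obtain ⟨m2, hm2, he⟩ := k2 m' h
          exact ⟨m2, List.mem_cons_of_mem _ (hL₂ m2 hm2).1, he⟩
      · rw [List.flatten_cons, movesApplicable_append]
        exact ⟨hBa, k3⟩
      · rw [List.flatten_cons, applyMoves_append, k4, hBe']
        show applyMoves T.s L₂ (applyMoves T.s L₁ (IM T.s m b)) = _
        rw [← applyMoves_append, heq']
        rfl
      · intro B' h
        rcases List.mem_cons.mp h with h | h
        · subst h
          intro ma hma mb hmb
          exact ((hBv ma hma).2.1).trans ((hBv mb hmb).2.1).symm
        · exact k5 B' h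
      · rw [List.pairwise_cons]
        refine ⟨?_, k6⟩
        intro B' hB' ma hma mb hmb
        rw [(hBv ma hma).2.1]
        obtain ⟨m2, hm2, he⟩ := k2 mb (List.mem_flatten.mpr ⟨B', hB', hmb⟩)
        rw [he]
        exact fun hcon => (hL₂ m2 hm2).2 hcon.symm
      · intro B' h
        rcases List.mem_cons.mp h with h | h
        · subst h; exact hBp
        · exact k7 B' h

/-- Support-disjointness implies the `countP` condition. -/
lemma countP_le_one_of_pairwise {B : List (MoveDatum α n)} (hp : B.Pairwise XDisj)
    (x : α) : (B.countP fun m => decide (m.x1 = x ∨ m.x2 = x)) ≤ 1 := by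
  induction B with
  | nil => simp
  | cons m B ih =>
    obtain ⟨hmB, hB⟩ := List.pairwise_cons.mp hp
    rw [List.countP_cons]
    by_cases hu : m.x1 = x ∨ m.x2 = x
    · have hz : B.countP (fun m => decide (m.x1 = x ∨ m.x2 = x)) = 0 := by
        rw [List.countP_eq_zero]
        intro m' hm'
        simp only [decide_eq_true_eq]
        exact fun hu' => (hmB m' hm') x hu hu'
      rw [hz, Nat.zero_add]
      split_ifs <;> simp
    · have hfalse : decide (m.x1 = x ∨ m.x2 = x) = false := by
        simpa using hu
      rw [hfalse]
      simpa using ih hB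

/-- Support-disjointness бounds the length of a block by `⌊#I/2⌋`. -/
lemma length_le_half {B : List (MoveDatum α n)} (hv : ∀ m ∈ B, m.valid T)
    (hp : B.Pairwise XDisj) : B.length ≤ T.I.card / 2 := by
  classical
  have main : ∀ B : List (MoveDatum α n), (∀ m ∈ B, m.valid T) → B.Pairwise XDisj →
      ∃ S : Finset α, S ⊆ T.I ∧ S.card = 2 * B.length ∧ ∀ y ∈ S, ∃ m ∈ B, Uses m y := by
    intro B
    induction B with
    | nil => exact fun _ _ => ⟨∅, by simp, by simp, by simp⟩
    | cons m B ih =>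
      intro hv hp
      obtain ⟨hmB, hB⟩ := List.pairwise_cons.mp hp
      obtain ⟨S, hS1, hS2, hS3⟩ := ih (fun m' h => hv m' (List.mem_cons_of_mem _ h)) hB
      have hm := hv m (List.mem_cons_self)
      have h2S : m.x2 ∉ S := by
        intro h
        obtain ⟨m', hm', hu⟩ := hS3 _ h
        exact (hmB m' hm') m.x2 (Or.inr rfl) hu
      have h1S : m.x1 ∉ insert m.x2 S := by
        rw [Finset.mem_insert]
        rintro (h | h)
        · exact hm.2.2.2.2 h
        · obtain ⟨m', hm', hu⟩ := hS3 _ h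
          exact (hmB m' hm') m.x1 (Or.inl rfl) hu
      refine ⟨insert m.x1 (insert m.x2 S), ?_, ?_, ?_⟩
      · intro y hy
        rw [Finset.mem_insert, Finset.mem_insert] at hy
        rcases hy with rfl | rfl | hy
        · exact hm.2.2.1
        · exact hm.2.2.2.1
        · exact hS1 hy
      · rw [Finset.card_insert_of_notMem h1S, Finset.card_insert_of_notMem h2S, hS2]
        simp only [List.length_cons]
        ring
      · intro y hy
        rw [Finset.mem_insert, Finset.mem_insert] at hy
        rcases hy with rfl | rfl | hy
        · exact ⟨m, List.mem_cons_self, Or.inl rfl⟩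
        · exact ⟨m, List.mem_cons_self, Or.inr rfl⟩
        · obtain ⟨m', hm', hu⟩ := hS3 y hy
          exact ⟨m', List.mem_cons_of_mem _ hm', hu⟩
  obtain ⟨S, hS1, hS2, _⟩ := main B hv hp
  have := Finset.card_le_card hS1
  rw [Nat.le_div_iff_mul_le (by norm_num : 0 < 2)]
  omega

end ReductionProofAux

/-- any finite applicable sequence of intersection moves can be replaced
by an applicable reduced sequence with the same result: the sequence splits into
consecutive blocks, all moves in a block act on a common element of `G`, the elements
are pairwise distinct across blocks, each element of the weaving set appears in at
most one move of each block, and consequently each block has at most `⌊#I/2⌋` moves. -/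
theorem reduced_sequence_of_moves
    {α : Type u} {H : Type v} [DecidableEq α] [AddCommGroup H] {n : ℕ}
    (T : WovenBasedMatrix α H n) (L : List (MoveDatum α n))
    (hvalid : ∀ m ∈ L, m.valid T) (happ : movesApplicable T.s L T.b) :
    ∃ Bs : List (List (MoveDatum α n)),
      (∀ m ∈ Bs.flatten, m.valid T) ∧
      movesApplicable T.s Bs.flatten T.b ∧
      applyMoves T.s Bs.flatten T.b = applyMoves T.s L T.b ∧
      (∀ B ∈ Bs, ∀ m ∈ B, ∀ m' ∈ B, m.g = m'.g) ∧
      Bs.Pairwise (fun B B' => ∀ m ∈ B, ∀ m' ∈ B', m.g ≠ m'.g) ∧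
      (∀ B ∈ Bs, ∀ x : α, (B.countP fun m => decide (m.x1 = x ∨ m.x2 = x)) ≤ 1) ∧
      (∀ B ∈ Bs, B.length ≤ T.I.card / 2) := by
  obtain ⟨Bs, k1, _k2, k3, k4, k5, k6, k7⟩ :=
    key_reduction L.length L T.b le_rfl hvalid (Hw.start T) happ
  refine ⟨Bs, k1, k3, k4, k5, k6, ?_, ?_⟩
  · intro B hB x
    exact countP_le_one_of_pairwise (k7 B hB) x
  · intro B hB
    exact length_le_half (fun m hm => k1 m (List.mem_flatten.mpr ⟨B, hB, hm⟩)) (k7 B hB)
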